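/- Let X be a complete operator system in a unital C*-algebra A and let L : X → [0,∞] be a Lipschitz seminorm such that the image of {x ∈ X : L(x) ≤ 1} in X/ℂ·1 is totally bounded for the quotient norm (i.e. (X,L) is a compact quantum metric space). Let Y ⊆ X be a norm-closed subspace with 1 ∈ Y and y* ∈ Y for all y ∈ Y, such that {y ∈ Y : L(y) < ∞} is norm-dense in Y. Suppose there exist a constant D ≥ 0, a number ε > 0, and a unital positive linear map Φ : X → Y such that L(Φ(x)) ≤ (1+D)·L(x) and ‖x − Φ(x)‖ ≤ ε·L(x) for all x ∈ X. Then for all states μ, ν on X: d_L(μ,ν) ≤ (D/(1+D))·diam(X,L) + 2ε + sup{|μ(y) − ν(y)| : y ∈ Y, L(y) ≤ 1}, where diam(X,L) := sup{d_L(μ',ν') : μ', ν' states on X} and d_L(μ,ν) := sup{|μ(x) − ν(x)| : x ∈ X, L(x) ≤ 1}. -/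

import Mathlib

open scoped ENNReal ComplexOrder

/-- `L : X → [0,∞]` is a Lipschitz seminorm on the operator system `X`:  it is subadditive
and absolutely homogeneous on `X`, its domain `{x ∈ X : L x < ∞}` is norm-dense in `X`, its
kernel contains the scalars `ℂ·1`, and it is invariant under the adjoint operation. -/
def IsLipschitzSeminormOn {A : Type*} [CStarAlgebra A] (X : Submodule ℂ A)
    (L : A → ℝ≥0∞) : Prop :=
  (∀ x ∈ X, ∀ y ∈ X, L (x + y) ≤ L x + L y) ∧
  (∀ (c : ℂ), ∀ x ∈ X, L (c • x) = (‖c‖₊ : ℝ≥0∞) * L x) ∧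
  (∀ x ∈ X, x ∈ closure {y : A | y ∈ X ∧ L y < ⊤}) ∧
  (∀ c : ℂ, L (c • (1 : A)) = 0) ∧
  (∀ x ∈ X, L (star x) = L x)

/-- A state on the operator system `X`: a linear functional sending the unit to `1` which
is nonnegative on the elements of `X` that are positive in the ambient C*-algebra. -/
def IsStateOn {A : Type*} [CStarAlgebra A] (X : Submodule ℂ A) (hX1 : (1 : A) ∈ X)
    (μ : ↥X →ₗ[ℂ] ℂ) : Prop :=
  μ ⟨1, hX1⟩ = 1 ∧ ∀ x : ↥X, (∃ y : A, (x : A) = star y * y) → 0 ≤ μ x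

/-- The Monge–Kantorovič distance `d_L(μ,ν) = sup{|μ(x) − ν(x)| : x ∈ X, L(x) ≤ 1}`,
as an element of `[0,∞]`. -/
noncomputable def MKdist {A : Type*} [CStarAlgebra A] (X : Submodule ℂ A)
    (L : A → ℝ≥0∞) (μ ν : ↥X →ₗ[ℂ] ℂ) : ℝ≥0∞ :=
  ⨆ (x : ↥X) (_ : L (x : A) ≤ 1), (‖μ x - ν x‖₊ : ℝ≥0∞)

lemma aux_pos_witness {A : Type} [CStarAlgebra A] (a : A) (ha : IsSelfAdjoint a) :
    ∃ y : A, ‖a‖ • (1:A) - a = star y * y := by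
  letI := CStarAlgebra.spectralOrder A
  haveI := CStarAlgebra.spectralOrderedRing A
  rw [← Algebra.algebraMap_eq_smul_one]
  have h : 0 ≤ algebraMap ℝ A ‖a‖ - a := sub_nonneg.mpr ha.le_algebraMap_norm_self
  refine ⟨CFC.sqrt (algebraMap ℝ A ‖a‖ - a), ?_⟩
  rw [(IsSelfAdjoint.of_nonneg (CFC.sqrt_nonneg _)).star_eq, CFC.sqrt_mul_sqrt_self _ h]

lemma state_sa {A : Type} [CStarAlgebra A] {X : Submodule ℂ A} (hX1 : (1:A) ∈ X)
    {μ : ↥X →ₗ[ℂ] ℂ} (hμ : IsStateOn X hX1 μ) (w : ↥X) (hw : IsSelfAdjoint ((w:A))) :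
    (μ w).im = 0 ∧ |(μ w).re| ≤ ‖(w : A)‖ := by
  set r := ‖(w : A)‖ with hr
  have h1 : 0 ≤ μ ((r:ℂ) • ⟨1,hX1⟩ - w) := by
    refine hμ.2 _ ?_
    have hcoe : (((r:ℂ) • (⟨1,hX1⟩:↥X) - w : ↥X) : A) = r • (1:A) - (w:A) := by
      push_cast [Complex.coe_smul]
      rfl
    rw [hcoe]
    exact aux_pos_witness _ hw
  have h2 : 0 ≤ μ ((r:ℂ) • ⟨1,hX1⟩ + w) := by
    refine hμ.2 _ ?_
    have hcoe : (((r:ℂ) • (⟨1,hX1⟩:↥X) + w : ↥X) : A) = ‖-(w:A)‖ • (1:A) - (-(w:A)) := by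
      push_cast [Complex.coe_smul]
      rw [norm_neg, sub_neg_eq_add]
    rw [hcoe]
    exact aux_pos_witness _ hw.neg
  have e1 : μ ((r:ℂ) • ⟨1,hX1⟩ - w) = (r:ℂ) - μ w := by
    rw [map_sub, map_smul, hμ.1, smul_eq_mul, mul_one]
  have e2 : μ ((r:ℂ) • ⟨1,hX1⟩ + w) = (r:ℂ) + μ w := by
    rw [map_add, map_smul, hμ.1, smul_eq_mul, mul_one]
  rw [e1, Complex.le_def] at h1
  rw [e2, Complex.le_def] at h2
  simp only [Complex.zero_re, Complex.zero_im, Complex.sub_re, Complex.sub_im,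
    Complex.add_re, Complex.add_im, Complex.ofReal_re, Complex.ofReal_im] at h1 h2
  constructor
  · linarith [h1.2, h2.2]
  · rw [abs_le]; constructor <;> linarith [h1.1, h2.1]

lemma state_norm_le {A : Type} [CStarAlgebra A] {X : Submodule ℂ A}
    (hXstar : ∀ x ∈ X, star x ∈ X) (hX1 : (1:A) ∈ X)
    {μ : ↥X →ₗ[ℂ] ℂ} (hμ : IsStateOn X hX1 μ) (v : ↥X) : ‖μ v‖ ≤ ‖(v : A)‖ := by
  rcases eq_or_ne (μ v) 0 with h | h
  · simp [h]
  · set c : ℂ := (starRingEnd ℂ (μ v)) / ‖μ v‖ with hc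
    have hc1 : ‖c‖ = 1 := by
      rw [hc, norm_div]
      simp [h]
    set u : ↥X := c • v with hu
    have hcu : μ u = (‖μ v‖ : ℂ) := by
      have hnz : (‖μ v‖ : ℂ) ≠ 0 := by
        simpa using norm_ne_zero_iff.mpr h
      rw [hu, map_smul, smul_eq_mul, hc, div_mul_eq_mul_div,
        ← Complex.normSq_eq_conj_mul_self, Complex.normSq_eq_norm_sq]
      rw [sq]
      push_cast
      rw [mul_div_assoc, div_self hnz, mul_one]
    set su : ↥X := ⟨star (u:A), hXstar _ u.2⟩ with hsu
    set w : ↥X := (2⁻¹ : ℂ) • (u + su) with hwdef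
    set w' : ↥X := (2 * Complex.I)⁻¹ • (u - su) with hw'def
    have hsucoe : ((su : ↥X) : A) = star ((u:A)) := rfl
    have hw : IsSelfAdjoint ((w:A)) := by
      have : ((w:A)) = (2⁻¹ : ℂ) • ((u:A) + star (u:A)) := by
        rw [hwdef]; push_cast [hsucoe]; rfl
      rw [IsSelfAdjoint, this, star_smul, star_add, star_star]
      simp [add_comm]
    have hw' : IsSelfAdjoint ((w':A)) := by
      have : ((w':A)) = (2 * Complex.I)⁻¹ • ((u:A) - star (u:A)) := by
        rw [hw'def]; push_cast [hsucoe]; rfl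
      have hstar : star (((2:ℂ) * Complex.I)⁻¹) = -(((2:ℂ) * Complex.I)⁻¹) := by
        rw [Complex.star_def, map_inv₀, map_mul, Complex.conj_I, map_ofNat, mul_neg, inv_neg]
      rw [IsSelfAdjoint, this, star_smul, star_sub, star_star, hstar, neg_smul, ← smul_neg,
        neg_sub]
    clear_value u su w w'
    have huw : u = w + Complex.I • w' := by
      rw [hwdef, hw'def, smul_smul]
      have h2 : Complex.I * (2 * Complex.I)⁻¹ = 2⁻¹ := by
        field_simp
      rw [h2, ← smul_add]
      have h3 : u + su + (u - su) = (2:ℂ) • u := by rw [two_smul]; abel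
      rw [h3, smul_smul]
      norm_num
    have him' := (state_sa hX1 hμ w' hw').1
    have hre : (‖μ v‖:ℝ) = (μ w).re := by
      have h3 : μ u = μ w + Complex.I * μ w' := by
        conv_lhs => rw [huw]
        rw [map_add, map_smul, smul_eq_mul]
      rw [hcu] at h3
      have := congrArg Complex.re h3
      simpa [Complex.add_re, Complex.mul_re, him'] using this
    have hb := (state_sa hX1 hμ w hw).2
    have hwnorm : ‖(w:A)‖ ≤ ‖(v:A)‖ := by
      have hco : ((w:A)) = (2⁻¹ : ℂ) • ((u:A) + star (u:A)) := by
        rw [hwdef]; push_cast [hsucoe]; rfl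
      have hucoe : ‖(u:A)‖ = ‖(v:A)‖ := by
        rw [hu]
        push_cast
        rw [norm_smul, hc1, one_mul]
      calc ‖(w:A)‖ = ‖(2⁻¹:ℂ)‖ * ‖(u:A) + star (u:A)‖ := by rw [hco, norm_smul]
        _ ≤ ‖(2⁻¹:ℂ)‖ * (‖(u:A)‖ + ‖star (u:A)‖) := by
            gcongr
            exact norm_add_le _ _
        _ = ‖(v:A)‖ := by
            have h5 : ‖(2⁻¹:ℂ)‖ = 2⁻¹ := by norm_num
            rw [norm_star, hucoe, h5]; ring
    calc ‖μ v‖ = (μ w).re := hre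
      _ ≤ |(μ w).re| := le_abs_self _
      _ ≤ ‖(w:A)‖ := hb
      _ ≤ ‖(v:A)‖ := hwnorm

/-- Corollary 2.12 of the paper: if a unital positive map `Φ : X → Y ⊆ X` satisfies
`L(Φ(x)) ≤ (1+D)·L(x)` and `‖x − Φ(x)‖ ≤ ε·L(x)`, then for all states `μ, ν` on `X`:
`d_L(μ,ν) ≤ (D/(1+D))·diam(X,L) + 2ε + d_L(μ|_Y, ν|_Y)`. -/
theorem statement4 {A : Type} [CStarAlgebra A] (X : Submodule ℂ A)
    (hXclosed : IsClosed (X : Set A)) (hXstar : ∀ x ∈ X, star x ∈ X) (hX1 : (1 : A) ∈ X)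
    (L : A → ℝ≥0∞) (hL : IsLipschitzSeminormOn X L)
    -- `(X, L)` is a compact quantum metric space (Rieffel's criterion)
    (htb : ∀ r : ℝ, 0 < r → ∃ F : Finset A, (↑F : Set A) ⊆ (X : Set A) ∧
      ∀ x ∈ X, L x ≤ 1 → ∃ y ∈ F, ∃ c : ℂ, ‖x - y - c • (1 : A)‖ < r)
    -- `Y ⊆ X` is a sub-operator system with norm-dense Lipschitz domain
    (Y : Submodule ℂ A) (hYX : Y ≤ X)
    (hYclosed : IsClosed (Y : Set A)) (hYstar : ∀ y ∈ Y, star y ∈ Y) (hY1 : (1 : A) ∈ Y)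
    (hYdense : ∀ y ∈ Y, y ∈ closure {z : A | z ∈ Y ∧ L z < ⊤})
    -- the unital positive map `Φ : X → Y`
    (D : ℝ) (hD : 0 ≤ D) (ε : ℝ) (hε : 0 < ε)
    (Φ : ↥X →ₗ[ℂ] ↥X)
    (hΦY : ∀ x : ↥X, ((Φ x : ↥X) : A) ∈ Y)
    (hΦ1 : Φ ⟨1, hX1⟩ = ⟨1, hX1⟩)
    (hΦpos : ∀ x : ↥X, (∃ y : A, (x : A) = star y * y) →
      ∃ z : A, ((Φ x : ↥X) : A) = star z * z)
    (hΦL : ∀ x : ↥X, L ((Φ x : ↥X) : A) ≤ ENNReal.ofReal (1 + D) * L (x : A))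
    (hΦapprox : ∀ x : ↥X,
      (‖(x : A) - ((Φ x : ↥X) : A)‖₊ : ℝ≥0∞) ≤ ENNReal.ofReal ε * L (x : A))
    -- two states on `X`
    (μ ν : ↥X →ₗ[ℂ] ℂ) (hμ : IsStateOn X hX1 μ) (hν : IsStateOn X hX1 ν) :
    MKdist X L μ ν ≤
      ENNReal.ofReal (D / (1 + D)) *
          (⨆ (μ' : ↥X →ₗ[ℂ] ℂ) (_ : IsStateOn X hX1 μ') (ν' : ↥X →ₗ[ℂ] ℂ)
            (_ : IsStateOn X hX1 ν'), MKdist X L μ' ν') +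
        ENNReal.ofReal (2 * ε) +
        ⨆ (x : ↥X) (_ : (x : A) ∈ Y) (_ : L (x : A) ≤ 1), (‖μ x - ν x‖₊ : ℝ≥0∞) := by
  obtain ⟨hLadd, hLsmul, hLdense, hLscalar, hLstar⟩ := hL
  have h1D : (0:ℝ) < 1 + D := by linarith
  refine iSup₂_le fun x hx => ?_
  have hμΦ : IsStateOn X hX1 (μ.comp Φ) :=
    ⟨by simp [LinearMap.comp_apply, hΦ1, hμ.1], fun v hv => hμ.2 _ (hΦpos v hv)⟩
  have hνΦ : IsStateOn X hX1 (ν.comp Φ) :=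
    ⟨by simp [LinearMap.comp_apply, hΦ1, hν.1], fun v hv => hν.2 _ (hΦpos v hv)⟩
  set z : ↥X := Φ x with hz
  set w : ↥X := ((((1+D)⁻¹ : ℝ)) : ℂ) • z with hwdef
  have hwcoe : ((w:A)) = ((((1+D)⁻¹ : ℝ)) : ℂ) • ((z:A)) := rfl
  have hwY : ((w:A)) ∈ Y := by rw [hwcoe]; exact Y.smul_mem _ (hΦY x)
  have hnn : (‖((((1+D)⁻¹ : ℝ)) : ℂ)‖₊ : ℝ≥0∞) = ENNReal.ofReal ((1+D)⁻¹) := by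
    rw [← enorm_eq_nnnorm, ← ofReal_norm, Complex.norm_real, Real.norm_eq_abs,
      abs_of_pos (by positivity)]
  have hwL : L ((w:A)) ≤ 1 := by
    calc L ((w:A)) = ENNReal.ofReal ((1+D)⁻¹) * L ((z:A)) := by
          rw [hwcoe, hLsmul _ _ z.2, hnn]
      _ ≤ ENNReal.ofReal ((1+D)⁻¹) * (ENNReal.ofReal (1 + D) * L ((x:A))) := by
          gcongr
          exact hΦL x
      _ = (ENNReal.ofReal ((1+D)⁻¹) * ENNReal.ofReal (1 + D)) * L ((x:A)) := by
          rw [mul_assoc]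
      _ = 1 * L ((x:A)) := by
          rw [← ENNReal.ofReal_mul (by positivity), inv_mul_cancel₀ h1D.ne',
            ENNReal.ofReal_one]
      _ ≤ 1 := by rw [one_mul]; exact hx
  -- the exact scaling identity
  have hμw : μ w = ((((1+D)⁻¹ : ℝ)) : ℂ) * μ z := by rw [hwdef, map_smul, smul_eq_mul]
  have hνw : ν w = ((((1+D)⁻¹ : ℝ)) : ℂ) * ν z := by rw [hwdef, map_smul, smul_eq_mul]
  have hsplit : ‖μ z - ν z‖ = ‖μ w - ν w‖ + D / (1 + D) * ‖μ z - ν z‖ := by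
    have : ‖μ w - ν w‖ = (1+D)⁻¹ * ‖μ z - ν z‖ := by
      rw [hμw, hνw, ← mul_sub, norm_mul, Complex.norm_real, Real.norm_eq_abs,
        abs_of_pos (by positivity)]
    rw [this]
    field_simp
  -- bounds on the three pieces
  have estS : (‖μ w - ν w‖₊ : ℝ≥0∞) ≤
      ⨆ (x : ↥X) (_ : (x : A) ∈ Y) (_ : L (x : A) ≤ 1), (‖μ x - ν x‖₊ : ℝ≥0∞) :=
    le_iSup_of_le w (le_iSup_of_le hwY (le_iSup_of_le hwL le_rfl))
  have estT : (‖μ z - ν z‖₊ : ℝ≥0∞) ≤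
      ⨆ (μ' : ↥X →ₗ[ℂ] ℂ) (_ : IsStateOn X hX1 μ') (ν' : ↥X →ₗ[ℂ] ℂ)
        (_ : IsStateOn X hX1 ν'), MKdist X L μ' ν' := by
    have h1 : (‖μ z - ν z‖₊ : ℝ≥0∞) ≤ MKdist X L (μ.comp Φ) (ν.comp Φ) :=
      le_iSup_of_le x (le_iSup_of_le hx le_rfl)
    exact h1.trans (le_iSup_of_le (μ.comp Φ) (le_iSup_of_le hμΦ
      (le_iSup_of_le (ν.comp Φ) (le_iSup_of_le hνΦ le_rfl))))
  have estμ : (‖μ x - μ z‖₊ : ℝ≥0∞) ≤ ENNReal.ofReal ε := by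
    have h2 : ‖μ x - μ z‖ ≤ ‖(x:A) - ((z:A))‖ := by
      rw [← map_sub]
      simpa using state_norm_le hXstar hX1 hμ (x - z)
    calc (‖μ x - μ z‖₊ : ℝ≥0∞) ≤ (‖(x:A) - ((z:A))‖₊ : ℝ≥0∞) := by
          rw [← enorm_eq_nnnorm, ← ofReal_norm, ← enorm_eq_nnnorm, ← ofReal_norm]
          exact ENNReal.ofReal_le_ofReal h2
      _ ≤ ENNReal.ofReal ε * L ((x:A)) := hΦapprox x
      _ ≤ ENNReal.ofReal ε * 1 := by gcongr
      _ = ENNReal.ofReal ε := mul_one _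
  have estν : (‖ν x - ν z‖₊ : ℝ≥0∞) ≤ ENNReal.ofReal ε := by
    have h2 : ‖ν x - ν z‖ ≤ ‖(x:A) - ((z:A))‖ := by
      rw [← map_sub]
      simpa using state_norm_le hXstar hX1 hν (x - z)
    calc (‖ν x - ν z‖₊ : ℝ≥0∞) ≤ (‖(x:A) - ((z:A))‖₊ : ℝ≥0∞) := by
          rw [← enorm_eq_nnnorm, ← ofReal_norm, ← enorm_eq_nnnorm, ← ofReal_norm]
          exact ENNReal.ofReal_le_ofReal h2
      _ ≤ ENNReal.ofReal ε * L ((x:A)) := hΦapprox x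
      _ ≤ ENNReal.ofReal ε * 1 := by gcongr
      _ = ENNReal.ofReal ε := mul_one _
  have keysplit : (‖μ z - ν z‖₊ : ℝ≥0∞) ≤ (‖μ w - ν w‖₊ : ℝ≥0∞) +
      ENNReal.ofReal (D / (1 + D)) * (‖μ z - ν z‖₊ : ℝ≥0∞) := by
    rw [← enorm_eq_nnnorm, ← ofReal_norm, ← enorm_eq_nnnorm (μ w - ν w), ← ofReal_norm (μ w - ν w)]
    refine le_of_eq ?_
    calc ENNReal.ofReal ‖μ z - ν z‖
        = ENNReal.ofReal (‖μ w - ν w‖ + D / (1 + D) * ‖μ z - ν z‖) := by rw [← hsplit]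
      _ = ENNReal.ofReal ‖μ w - ν w‖ + ENNReal.ofReal (D / (1 + D) * ‖μ z - ν z‖) :=
          ENNReal.ofReal_add (norm_nonneg _) (by positivity)
      _ = ENNReal.ofReal ‖μ w - ν w‖ +
          ENNReal.ofReal (D / (1 + D)) * ENNReal.ofReal ‖μ z - ν z‖ := by
          rw [ENNReal.ofReal_mul (by positivity)]
  have htri : (‖μ x - ν x‖₊ : ℝ≥0∞) ≤
      (‖μ x - μ z‖₊ : ℝ≥0∞) + (‖μ z - ν z‖₊ : ℝ≥0∞) + (‖ν z - ν x‖₊ : ℝ≥0∞) := by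
    have h3 : μ x - ν x = (μ x - μ z) + (μ z - ν z) + (ν z - ν x) := by ring
    rw [h3]
    calc (‖(μ x - μ z) + (μ z - ν z) + (ν z - ν x)‖₊ : ℝ≥0∞)
        ≤ (‖(μ x - μ z) + (μ z - ν z)‖₊ : ℝ≥0∞) + (‖ν z - ν x‖₊ : ℝ≥0∞) := by
          exact_mod_cast nnnorm_add_le _ _
      _ ≤ (‖μ x - μ z‖₊ : ℝ≥0∞) + (‖μ z - ν z‖₊ : ℝ≥0∞) + (‖ν z - ν x‖₊ : ℝ≥0∞) := by
          gcongr
          exact_mod_cast nnnorm_add_le _ _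
  have estν' : (‖ν z - ν x‖₊ : ℝ≥0∞) ≤ ENNReal.ofReal ε := by
    rwa [← nnnorm_neg, neg_sub]
  have h2e : ENNReal.ofReal (2*ε) = ENNReal.ofReal ε + ENNReal.ofReal ε := by
    rw [two_mul, ENNReal.ofReal_add hε.le hε.le]
  calc (‖μ x - ν x‖₊ : ℝ≥0∞)
      ≤ (‖μ x - μ z‖₊ : ℝ≥0∞) + (‖μ z - ν z‖₊ : ℝ≥0∞) + (‖ν z - ν x‖₊ : ℝ≥0∞) := htri
    _ ≤ ENNReal.ofReal ε + ((‖μ w - ν w‖₊ : ℝ≥0∞) +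
          ENNReal.ofReal (D / (1 + D)) * (‖μ z - ν z‖₊ : ℝ≥0∞)) + ENNReal.ofReal ε :=
        add_le_add (add_le_add estμ keysplit) estν'
    _ ≤ ENNReal.ofReal ε +
          ((⨆ (x : ↥X) (_ : (x : A) ∈ Y) (_ : L (x : A) ≤ 1), (‖μ x - ν x‖₊ : ℝ≥0∞)) +
          ENNReal.ofReal (D / (1 + D)) *
            (⨆ (μ' : ↥X →ₗ[ℂ] ℂ) (_ : IsStateOn X hX1 μ') (ν' : ↥X →ₗ[ℂ] ℂ)
              (_ : IsStateOn X hX1 ν'), MKdist X L μ' ν')) + ENNReal.ofReal ε := by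
        gcongr
    _ = ENNReal.ofReal (D / (1 + D)) *
          (⨆ (μ' : ↥X →ₗ[ℂ] ℂ) (_ : IsStateOn X hX1 μ') (ν' : ↥X →ₗ[ℂ] ℂ)
            (_ : IsStateOn X hX1 ν'), MKdist X L μ' ν') +
        ENNReal.ofReal (2 * ε) +
        ⨆ (x : ↥X) (_ : (x : A) ∈ Y) (_ : L (x : A) ≤ 1), (‖μ x - ν x‖₊ : ℝ≥0∞) := by
        rw [h2e]
        ring
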